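/- Let M⁺ and M⁻ be two gauges (positively homogeneous, subadditive, positive on nonzero vectors) on ℝⁿ with A⁻¹M⁻ ≤ M⁺ ≤ AM⁻ for some A > 0, and let F = (M⁺ + M⁻)/2. Suppose both M⁺ and M⁻ are β-uniformly convex in the sense that for all x, y with M^±(x), M^±(y) ≤ 1 and M^±(x−y) ≥ ε one has 1 − M^±((x+y)/2) ≥ C_± ε^β. Then F is β-uniformly convex: there exists C > 0 such that for all x, y with F(x), F(y) ≤ 1 and F(x−y) ≥ ε, one has 1 − F((x+y)/2) ≥ C ε^β. -/

import Mathlib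

/-- `G` is a gauge on `ℝⁿ`: positively homogeneous, subadditive, positive on nonzero vectors. -/
def IsGauge {n : ℕ} (G : EuclideanSpace ℝ (Fin n) → ℝ) : Prop :=
  (∀ (t : ℝ), 0 ≤ t → ∀ v, G (t • v) = t * G v) ∧
  (∀ u v, G (u + v) ≤ G u + G v) ∧
  (∀ v, v ≠ 0 → 0 < G v)

namespace Stmt5Aux

variable {n : ℕ}

lemma gauge_zero {G : EuclideanSpace ℝ (Fin n) → ℝ} (hG : IsGauge G) : G 0 = 0 := by
  have h := hG.1 0 le_rfl 0
  simpa using h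

lemma gauge_nonneg {G : EuclideanSpace ℝ (Fin n) → ℝ} (hG : IsGauge G) (v) : 0 ≤ G v := by
  rcases eq_or_ne v 0 with h | h
  · simp [h, gauge_zero hG]
  · exact (hG.2.2 v h).le

/-- Uniform convexity forces quasi-symmetry of the gauge. -/
lemma gauge_sym {G : EuclideanSpace ℝ (Fin n) → ℝ} (hG : IsGauge G)
    {β C : ℝ} (hβ : 2 ≤ β) (hC : 0 < C)
    (huc : ∀ ε ∈ Set.Icc (0:ℝ) 2, ∀ x y, G x ≤ 1 → G y ≤ 1 → ε ≤ G (x - y) →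
      C * ε ^ β ≤ 1 - G ((2:ℝ)⁻¹ • (x + y))) (v : EuclideanSpace ℝ (Fin n)) :
    G (-v) ≤ max 2 (1 / (C * 2 ^ β)) * G v := by
  set B := max 2 (1 / (C * 2 ^ β)) with hB
  rcases eq_or_ne v 0 with rfl | hv
  · simp [gauge_zero hG]
  have hg : 0 < G v := hG.2.2 v hv
  set w := (G v)⁻¹ • v with hw
  have hGw : G w = 1 := by
    rw [hw, hG.1 _ (inv_nonneg.2 hg.le)]
    exact inv_mul_cancel₀ hg.ne'
  have hGneg : G (-v) = G v * G (-w) := by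
    have h1 : -v = (G v) • (-w) := by
      rw [hw, smul_neg, smul_smul, mul_inv_cancel₀ hg.ne', one_smul]
    rw [h1, hG.1 _ hg.le]
  have hL0 : 0 ≤ G (-w) := gauge_nonneg hG _
  have key : G (-w) ≤ B := by
    rcases le_or_gt (G (-w)) 2 with h | h
    · exact h.trans (le_max_left _ _)
    · set L := G (-w) with hLdef
      have hLpos : (0:ℝ) < L := by linarith
      set t0 := 2 / L with ht0
      have ht0pos : 0 < t0 := by positivity
      have ht0lt : t0 < 1 := by
        rw [ht0, div_lt_one hLpos]; linarith
      have hx : G ((1 - t0) • w) = 1 - t0 := by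
        rw [hG.1 _ (by linarith), hGw]; ring
      have hxy : G ((1 - t0) • w - w) = 2 := by
        have h1 : (1 - t0) • w - w = t0 • (-w) := by
          rw [smul_neg]; module
        rw [h1, hG.1 _ ht0pos.le, ← hLdef, ht0]
        field_simp
      have hmid : G ((2:ℝ)⁻¹ • ((1 - t0) • w + w)) = 1 - t0 / 2 := by
        have h1 : (2:ℝ)⁻¹ • ((1 - t0) • w + w) = (1 - t0/2) • w := by
          module
        rw [h1, hG.1 _ (by linarith), hGw]; ring
      have h2 := huc 2 ⟨by norm_num, le_rfl⟩ ((1 - t0) • w) w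
        (by rw [hx]; linarith) (le_of_eq hGw) (le_of_eq hxy.symm)
      rw [hmid] at h2
      have h3 : C * 2 ^ β ≤ 1 / L := by
        have e : 1 - (1 - t0/2) = t0 / 2 := by ring
        rw [e] at h2
        calc C * 2 ^ β ≤ t0 / 2 := h2
          _ = 1 / L := by rw [ht0]; ring
      have hCb : (0:ℝ) < C * 2 ^ β := by positivity
      have h4 : L ≤ 1 / (C * 2 ^ β) := by
        rw [le_div_iff₀ hCb]
        calc L * (C * 2 ^ β) ≤ L * (1/L) := mul_le_mul_of_nonneg_left h3 hL0
          _ = 1 := by field_simp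
      exact h4.trans (le_max_right _ _)
  rw [hGneg]
  calc G v * G (-w) ≤ G v * B := mul_le_mul_of_nonneg_left key hg.le
    _ = B * G v := mul_comm _ _

set_option maxHeartbeats 1000000 in
/-- Core lemma: uniform convexity of the average at points with equal average-gauge value. -/
lemma core (Mp Mm : EuclideanSpace ℝ (Fin n) → ℝ)
    (hMp : IsGauge Mp) (hMm : IsGauge Mm)
    (A : ℝ) (hA : 0 < A) (hcomp : ∀ v, A⁻¹ * Mm v ≤ Mp v ∧ Mp v ≤ A * Mm v)
    (β : ℝ) (hβ : 2 ≤ β)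
    (Cp : ℝ) (hCp : 0 < Cp)
    (hucp : ∀ ε ∈ Set.Icc (0 : ℝ) 2, ∀ x y, Mp x ≤ 1 → Mp y ≤ 1 → ε ≤ Mp (x - y) →
      Cp * ε ^ β ≤ 1 - Mp ((2 : ℝ)⁻¹ • (x + y))) :
    ∃ c > 0, ∀ t δ u v, 3/4 ≤ t → t ≤ 1 → 0 ≤ δ → δ ≤ 2 →
      Mp u + Mm u = 2*t → Mp v + Mm v = 2*t →
      2*δ ≤ Mp (u - v) + Mm (u - v) →
      Mp ((2:ℝ)⁻¹ • (u + v)) + Mm ((2:ℝ)⁻¹ • (u + v)) ≤ 2*t - c * δ ^ β := by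
  set A2 := max A 1 with hA2def
  have hA21 : (1:ℝ) ≤ A2 := le_max_right _ _
  have hA2pos : (0:ℝ) < A2 := by linarith
  have hPM : ∀ w, Mm w ≤ A2 * Mp w := by
    intro w
    have h := (hcomp w).1
    have h2 : Mm w ≤ A * Mp w := by
      have h3 := mul_le_mul_of_nonneg_left h hA.le
      rwa [← mul_assoc, mul_inv_cancel₀ hA.ne', one_mul] at h3
    calc Mm w ≤ A * Mp w := h2
      _ ≤ A2 * Mp w := mul_le_mul_of_nonneg_right (le_max_left A 1) (gauge_nonneg hMp w)
  set Bp := max 2 (1 / (Cp * 2 ^ β)) with hBpdef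
  have hBp1 : (1:ℝ) ≤ Bp := le_trans (by norm_num) (le_max_left _ _)
  have hBppos : (0:ℝ) < Bp := by linarith
  have hsym : ∀ v, Mp (-v) ≤ Bp * Mp v := fun v => gauge_sym hMp hβ hCp hucp v
  set κ := 3 / (16 * A2^2 * Bp) with hκdef
  have hκpos : 0 < κ := by positivity
  have hA2sq : (1:ℝ) ≤ A2^2 := by nlinarith only [hA21]
  have hκ316 : κ ≤ 3/16 := by
    rw [hκdef, div_le_div_iff₀ (by positivity) (by norm_num)]
    nlinarith only [hA2sq, hBp1, hA21]
  have hκ4 : κ * (4 * A2) ≤ 1 := by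
    rw [hκdef, div_mul_eq_mul_div, div_le_one (by positivity)]
    nlinarith only [hA2sq, hBp1, hA21, hA2pos]
  have hκβpos : 0 < κ ^ β := Real.rpow_pos_of_pos hκpos β
  refine ⟨3/(2*(1+A2)) * Cp * κ ^ β, by positivity, ?_⟩
  intro t δ u v ht1 ht2 hδ0 hδ2 hu hv hsep
  have hMpu0 : 0 ≤ Mp u := gauge_nonneg hMp u
  have hMpv0 : 0 ≤ Mp v := gauge_nonneg hMp v
  have hMmu0 : 0 ≤ Mm u := gauge_nonneg hMm u
  have hMmv0 : 0 ≤ Mm v := gauge_nonneg hMm v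
  have hpA : 2*t ≤ (1+A2) * Mp u := by linarith only [hu, hPM u]
  have hqA : 2*t ≤ (1+A2) * Mp v := by linarith only [hv, hPM v]
  have hplb : 3/(2*(1+A2)) ≤ Mp u := by
    rw [div_le_iff₀ (by positivity)]; linarith only [hpA, ht1]
  have hqlb : 3/(2*(1+A2)) ≤ Mp v := by
    rw [div_le_iff₀ (by positivity)]; linarith only [hqA, ht1]
  have hppos : 0 < Mp u := lt_of_lt_of_le (by positivity) hplb
  have hqpos : 0 < Mp v := lt_of_lt_of_le (by positivity) hqlb
  have hp2 : Mp u ≤ 2 := by linarith only [hu, hMmu0, ht2]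
  have hq2 : Mp v ≤ 2 := by linarith only [hv, hMmv0, ht2]
  have hMpuv : δ ≤ A2 * Mp (u - v) := by
    linarith only [hsep, hPM (u - v),
      mul_nonneg (by linarith only [hA21] : (0:ℝ) ≤ A2 - 1) (gauge_nonneg hMp (u - v))]
  set uh := (Mp u)⁻¹ • u with huhdef
  set vh := (Mp v)⁻¹ • v with hvhdef
  have hMpuh : Mp uh = 1 := by
    rw [huhdef, hMp.1 _ (inv_nonneg.2 hppos.le)]
    exact inv_mul_cancel₀ hppos.ne'
  have hMpvh : Mp vh = 1 := by
    rw [hvhdef, hMp.1 _ (inv_nonneg.2 hqpos.le)]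
    exact inv_mul_cancel₀ hqpos.ne'
  have hueq : u = (Mp u) • uh := by
    rw [huhdef, smul_smul, mul_inv_cancel₀ hppos.ne', one_smul]
  have hveq : v = (Mp v) • vh := by
    rw [hvhdef, smul_smul, mul_inv_cancel₀ hqpos.ne', one_smul]
  have hMmuh : Mm uh = (Mp u)⁻¹ * Mm u := by
    rw [huhdef, hMm.1 _ (inv_nonneg.2 hppos.le)]
  have hMmvh : Mm vh = (Mp v)⁻¹ * Mm v := by
    rw [hvhdef, hMm.1 _ (inv_nonneg.2 hqpos.le)]
  -- STEP: the normalized points are quantitatively separated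
  have hτ : κ * δ ≤ Mp (uh - vh) ∨ κ * δ ≤ Mp (vh - uh) := by
    have hXnn : 0 ≤ Mp (uh - vh) := gauge_nonneg hMp _
    have hYnn : 0 ≤ Mp (vh - uh) := gauge_nonneg hMp _
    by_cases hcase : 2 * A2 * (Bp * |Mp u - Mp v|) ≤ δ
    · left
      rcases le_total (Mp v) (Mp u) with hpq | hpq
      · have habs : |Mp u - Mp v| = Mp u - Mp v := abs_of_nonneg (by linarith only [hpq])
        rw [habs] at hcase
        have hid : u - v = (Mp v) • (uh - vh) + (Mp u - Mp v) • uh := by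
          nth_rewrite 1 [hueq]; nth_rewrite 1 [hveq]; module
        have hsub : Mp (u - v) ≤ (Mp v) * Mp (uh - vh) + (Mp u - Mp v) := by
          calc Mp (u - v) = Mp ((Mp v) • (uh - vh) + (Mp u - Mp v) • uh) := by rw [← hid]
            _ ≤ Mp ((Mp v) • (uh - vh)) + Mp ((Mp u - Mp v) • uh) := hMp.2.1 _ _
            _ = (Mp v) * Mp (uh - vh) + (Mp u - Mp v) * Mp uh := by
                rw [hMp.1 (Mp v) hqpos.le (uh - vh),
                  hMp.1 (Mp u - Mp v) (by linarith only [hpq]) uh]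
            _ = (Mp v) * Mp (uh - vh) + (Mp u - Mp v) := by rw [hMpuh]; ring
        have hgoal : 4*A2*(κ*δ) ≤ 4*A2*(Mp (uh - vh)) := by
          linarith only [mul_le_mul_of_nonneg_left hsub hA2pos.le,
            mul_le_mul_of_nonneg_right hκ4 hδ0, hMpuv, hcase,
            mul_nonneg (mul_nonneg (by linarith only [hq2] : (0:ℝ) ≤ 2 - Mp v) hXnn) hA2pos.le,
            mul_nonneg (mul_nonneg hA2pos.le (by linarith only [hBp1] : (0:ℝ) ≤ Bp - 1))
              (by linarith only [hpq] : (0:ℝ) ≤ Mp u - Mp v)]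
        exact le_of_mul_le_mul_left hgoal (by positivity : (0:ℝ) < 4*A2)
      · have habs : |Mp u - Mp v| = Mp v - Mp u := by
          rw [abs_sub_comm]; exact abs_of_nonneg (by linarith only [hpq])
        rw [habs] at hcase
        have hid : u - v = (Mp u) • (uh - vh) + (Mp v - Mp u) • (-vh) := by
          nth_rewrite 1 [hueq]; nth_rewrite 1 [hveq]; module
        have h5 : Mp (-vh) ≤ Bp := by
          have h6 := hsym vh; rw [hMpvh] at h6; linarith only [h6]
        have hsub : Mp (u - v) ≤ (Mp u) * Mp (uh - vh) + (Mp v - Mp u) * Bp := by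
          calc Mp (u - v) = Mp ((Mp u) • (uh - vh) + (Mp v - Mp u) • (-vh)) := by rw [← hid]
            _ ≤ Mp ((Mp u) • (uh - vh)) + Mp ((Mp v - Mp u) • (-vh)) := hMp.2.1 _ _
            _ = (Mp u) * Mp (uh - vh) + (Mp v - Mp u) * Mp (-vh) := by
                rw [hMp.1 (Mp u) hppos.le (uh - vh),
                  hMp.1 (Mp v - Mp u) (by linarith only [hpq]) (-vh)]
            _ ≤ (Mp u) * Mp (uh - vh) + (Mp v - Mp u) * Bp := by
                exact add_le_add le_rfl (mul_le_mul_of_nonneg_left h5 (by linarith only [hpq]))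
        have hgoal : 4*A2*(κ*δ) ≤ 4*A2*(Mp (uh - vh)) := by
          linarith only [mul_le_mul_of_nonneg_left hsub hA2pos.le,
            mul_le_mul_of_nonneg_right hκ4 hδ0, hMpuv, hcase,
            mul_nonneg (mul_nonneg (by linarith only [hp2] : (0:ℝ) ≤ 2 - Mp u) hXnn) hA2pos.le]
        exact le_of_mul_le_mul_left hgoal (by positivity : (0:ℝ) < 4*A2)
    · push_neg at hcase
      have hpq4 : Mp u * Mp v ≤ 4 := by
        nlinarith only [hp2, hq2, hMpu0, hMpv0]
      have hκid : (16*A2^2*Bp) * (κ*δ) = 3*δ := by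
        rw [hκdef]; field_simp
      rcases le_total (Mp v) (Mp u) with hpq | hpq
      · right
        have habs : |Mp u - Mp v| = Mp u - Mp v := abs_of_nonneg (by linarith only [hpq])
        rw [habs] at hcase
        have e1 : Mm vh - Mm uh = 2*t*(Mp u - Mp v) / (Mp u * Mp v) := by
          rw [hMmuh, hMmvh]
          have e2 : Mm u = 2*t - Mp u := by linarith only [hu]
          have e3 : Mm v = 2*t - Mp v := by linarith only [hv]
          rw [e2, e3]
          field_simp
          ring
        have hdiff : 3/8 * (Mp u - Mp v) ≤ Mm vh - Mm uh := by
          rw [e1, le_div_iff₀ (by positivity)]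
          nlinarith only [mul_nonneg (by linarith only [hpq] : (0:ℝ) ≤ Mp u - Mp v)
              (by linarith only [hpq4] : (0:ℝ) ≤ 4 - Mp u * Mp v),
            mul_nonneg (by linarith only [hpq] : (0:ℝ) ≤ Mp u - Mp v)
              (by linarith only [ht1] : (0:ℝ) ≤ 2*t - 3/2)]
        have htri : Mm vh ≤ Mm uh + Mm (vh - uh) := by
          have h := hMm.2.1 uh (vh - uh)
          have e : uh + (vh - uh) = vh := by abel
          rwa [e] at h
        have hMp38 : 3/8 * (Mp u - Mp v) ≤ A2 * Mp (vh - uh) := by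
          linarith only [hdiff, htri, hPM (vh - uh)]
        have hgoal : (16*A2^2*Bp) * (κ*δ) ≤ (16*A2^2*Bp) * Mp (vh - uh) := by
          rw [hκid]
          linarith only [hcase.le,
            mul_le_mul_of_nonneg_left hMp38 (by positivity : (0:ℝ) ≤ 16 * A2 * Bp)]
        exact le_of_mul_le_mul_left hgoal (by positivity : (0:ℝ) < 16*A2^2*Bp)
      · left
        have habs : |Mp u - Mp v| = Mp v - Mp u := by
          rw [abs_sub_comm]; exact abs_of_nonneg (by linarith only [hpq])
        rw [habs] at hcase
        have e1 : Mm uh - Mm vh = 2*t*(Mp v - Mp u) / (Mp u * Mp v) := by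
          rw [hMmuh, hMmvh]
          have e2 : Mm u = 2*t - Mp u := by linarith only [hu]
          have e3 : Mm v = 2*t - Mp v := by linarith only [hv]
          rw [e2, e3]
          field_simp
          ring
        have hdiff : 3/8 * (Mp v - Mp u) ≤ Mm uh - Mm vh := by
          rw [e1, le_div_iff₀ (by positivity)]
          nlinarith only [mul_nonneg (by linarith only [hpq] : (0:ℝ) ≤ Mp v - Mp u)
              (by linarith only [hpq4] : (0:ℝ) ≤ 4 - Mp u * Mp v),
            mul_nonneg (by linarith only [hpq] : (0:ℝ) ≤ Mp v - Mp u)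
              (by linarith only [ht1] : (0:ℝ) ≤ 2*t - 3/2)]
        have htri : Mm uh ≤ Mm vh + Mm (uh - vh) := by
          have h := hMm.2.1 vh (uh - vh)
          have e : vh + (uh - vh) = uh := by abel
          rwa [e] at h
        have hMp38 : 3/8 * (Mp v - Mp u) ≤ A2 * Mp (uh - vh) := by
          linarith only [hdiff, htri, hPM (uh - vh)]
        have hgoal : (16*A2^2*Bp) * (κ*δ) ≤ (16*A2^2*Bp) * Mp (uh - vh) := by
          rw [hκid]
          linarith only [hcase.le,
            mul_le_mul_of_nonneg_left hMp38 (by positivity : (0:ℝ) ≤ 16 * A2 * Bp)]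
        exact le_of_mul_le_mul_left hgoal (by positivity : (0:ℝ) < 16*A2^2*Bp)
  -- STEP: apply uniform convexity at the normalized points
  have hκδmem : κ * δ ∈ Set.Icc (0:ℝ) 2 := by
    constructor
    · positivity
    · linarith only [mul_le_mul hκ316 hδ2 hδ0 (by norm_num : (0:ℝ) ≤ 3/16)]
  have hmid : Cp * (κ*δ) ^ β ≤ 1 - Mp ((2:ℝ)⁻¹ • (uh + vh)) := by
    rcases hτ with h | h
    · exact hucp _ hκδmem uh vh hMpuh.le hMpvh.le h
    · have h7 := hucp _ hκδmem vh uh hMpvh.le hMpuh.le h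
      rwa [add_comm vh uh] at h7
  have hpow : (κ*δ) ^ β = κ ^ β * δ ^ β := Real.mul_rpow hκpos.le hδ0
  rw [hpow] at hmid
  have hδβ0 : 0 ≤ δ ^ β := Real.rpow_nonneg hδ0 β
  have hWnn : 0 ≤ Cp * (κ ^ β * δ ^ β) := by positivity
  -- STEP: midpoint decomposition
  have hMmmid : Mm ((2:ℝ)⁻¹ • (u + v)) ≤ (Mm u + Mm v)/2 := by
    rw [hMm.1 _ (by norm_num : (0:ℝ) ≤ 2⁻¹)]
    have h := hMm.2.1 u v
    linarith only [h]
  rcases le_total (Mp v) (Mp u) with hpq | hpq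
  · have hid : (2:ℝ)⁻¹ • (u + v) = (Mp v) • ((2:ℝ)⁻¹ • (uh + vh)) + ((Mp u - Mp v)/2) • uh := by
      nth_rewrite 1 [hueq]; nth_rewrite 1 [hveq]
      match_scalars <;> ring
    have h1 : Mp ((2:ℝ)⁻¹ • (u + v)) ≤ (Mp v) * Mp ((2:ℝ)⁻¹ • (uh + vh)) + (Mp u - Mp v)/2 := by
      calc Mp ((2:ℝ)⁻¹ • (u + v))
          = Mp ((Mp v) • ((2:ℝ)⁻¹ • (uh + vh)) + ((Mp u - Mp v)/2) • uh) := by rw [← hid]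
        _ ≤ Mp ((Mp v) • ((2:ℝ)⁻¹ • (uh + vh))) + Mp (((Mp u - Mp v)/2) • uh) := hMp.2.1 _ _
        _ = (Mp v) * Mp ((2:ℝ)⁻¹ • (uh + vh)) + ((Mp u - Mp v)/2) * Mp uh := by
            rw [hMp.1 (Mp v) hqpos.le ((2:ℝ)⁻¹ • (uh + vh)),
              hMp.1 ((Mp u - Mp v)/2) (by linarith only [hpq]) uh]
        _ = (Mp v) * Mp ((2:ℝ)⁻¹ • (uh + vh)) + (Mp u - Mp v)/2 := by rw [hMpuh]; ring
    have hZ : (Mp v) * Mp ((2:ℝ)⁻¹ • (uh + vh)) ≤ (Mp v) * (1 - Cp * (κ ^ β * δ ^ β)) :=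
      mul_le_mul_of_nonneg_left (by linarith only [hmid]) hqpos.le
    have hf : (3/(2*(1+A2))) * (Cp * (κ ^ β * δ ^ β)) ≤ (Mp v) * (Cp * (κ ^ β * δ ^ β)) :=
      mul_le_mul_of_nonneg_right hqlb hWnn
    linarith only [h1, hZ, hf, hMmmid, hu, hv]
  · have hid : (2:ℝ)⁻¹ • (u + v) = (Mp u) • ((2:ℝ)⁻¹ • (uh + vh)) + ((Mp v - Mp u)/2) • vh := by
      nth_rewrite 1 [hueq]; nth_rewrite 1 [hveq]
      match_scalars <;> ring
    have h1 : Mp ((2:ℝ)⁻¹ • (u + v)) ≤ (Mp u) * Mp ((2:ℝ)⁻¹ • (uh + vh)) + (Mp v - Mp u)/2 := by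
      calc Mp ((2:ℝ)⁻¹ • (u + v))
          = Mp ((Mp u) • ((2:ℝ)⁻¹ • (uh + vh)) + ((Mp v - Mp u)/2) • vh) := by rw [← hid]
        _ ≤ Mp ((Mp u) • ((2:ℝ)⁻¹ • (uh + vh))) + Mp (((Mp v - Mp u)/2) • vh) := hMp.2.1 _ _
        _ = (Mp u) * Mp ((2:ℝ)⁻¹ • (uh + vh)) + ((Mp v - Mp u)/2) * Mp vh := by
            rw [hMp.1 (Mp u) hppos.le ((2:ℝ)⁻¹ • (uh + vh)),
              hMp.1 ((Mp v - Mp u)/2) (by linarith only [hpq]) vh]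
        _ = (Mp u) * Mp ((2:ℝ)⁻¹ • (uh + vh)) + (Mp v - Mp u)/2 := by rw [hMpvh]; ring
    have hZ : (Mp u) * Mp ((2:ℝ)⁻¹ • (uh + vh)) ≤ (Mp u) * (1 - Cp * (κ ^ β * δ ^ β)) :=
      mul_le_mul_of_nonneg_left (by linarith only [hmid]) hppos.le
    have hf : (3/(2*(1+A2))) * (Cp * (κ ^ β * δ ^ β)) ≤ (Mp u) * (Cp * (κ ^ β * δ ^ β)) :=
      mul_le_mul_of_nonneg_right hplb hWnn
    linarith only [h1, hZ, hf, hMmmid, hu, hv]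

end Stmt5Aux

open Stmt5Aux in
set_option maxHeartbeats 1000000 in
theorem stmt5 (n : ℕ) (Mp Mm : EuclideanSpace ℝ (Fin n) → ℝ)
    (hMp : IsGauge Mp) (hMm : IsGauge Mm)
    (A : ℝ) (hA : 0 < A) (hcomp : ∀ v, A⁻¹ * Mm v ≤ Mp v ∧ Mp v ≤ A * Mm v)
    (β : ℝ) (hβ : 2 ≤ β)
    (Cp : ℝ) (hCp : 0 < Cp)
    (hucp : ∀ ε ∈ Set.Icc (0 : ℝ) 2, ∀ x y, Mp x ≤ 1 → Mp y ≤ 1 → ε ≤ Mp (x - y) →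
      Cp * ε ^ β ≤ 1 - Mp ((2 : ℝ)⁻¹ • (x + y)))
    (Cm : ℝ) (hCm : 0 < Cm)
    (hucm : ∀ ε ∈ Set.Icc (0 : ℝ) 2, ∀ x y, Mm x ≤ 1 → Mm y ≤ 1 → ε ≤ Mm (x - y) →
      Cm * ε ^ β ≤ 1 - Mm ((2 : ℝ)⁻¹ • (x + y))) :
    ∃ C > 0, ∀ ε ∈ Set.Icc (0 : ℝ) 2, ∀ x y,
      (Mp x + Mm x) / 2 ≤ 1 → (Mp y + Mm y) / 2 ≤ 1 → ε ≤ (Mp (x - y) + Mm (x - y)) / 2 →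
      C * ε ^ β ≤ 1 - (Mp ((2 : ℝ)⁻¹ • (x + y)) + Mm ((2 : ℝ)⁻¹ • (x + y))) / 2 := by
  have hβpos : (0:ℝ) < β := by linarith
  set A2 := max A 1 with hA2def
  have hA21 : (1:ℝ) ≤ A2 := le_max_right _ _
  have hA2pos : (0:ℝ) < A2 := by linarith
  have hPM : ∀ w, Mm w ≤ A2 * Mp w := by
    intro w
    have h := (hcomp w).1
    have h2 : Mm w ≤ A * Mp w := by
      have h3 := mul_le_mul_of_nonneg_left h hA.le
      rwa [← mul_assoc, mul_inv_cancel₀ hA.ne', one_mul] at h3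
    calc Mm w ≤ A * Mp w := h2
      _ ≤ A2 * Mp w := mul_le_mul_of_nonneg_right (le_max_left A 1) (gauge_nonneg hMp w)
  set Bp := max 2 (1 / (Cp * 2 ^ β)) with hBpdef
  have hBp1 : (1:ℝ) ≤ Bp := le_trans (by norm_num) (le_max_left _ _)
  have hBppos : (0:ℝ) < Bp := by linarith
  have hsym : ∀ v, Mp (-v) ≤ Bp * Mp v := fun v => gauge_sym hMp hβ hCp hucp v
  have hBFpos : (0:ℝ) < Bp * (1 + A2) := by positivity
  have hBF1 : (1:ℝ) ≤ Bp * (1 + A2) := by nlinarith only [hBp1, hA21]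
  have hFneg : ∀ w, Mp (-w) + Mm (-w) ≤ (Bp * (1 + A2)) * (Mp w + Mm w) := by
    intro w
    have h1 := hsym w
    have h2 := hPM (-w)
    have h3 := mul_le_mul_of_nonneg_left (hsym w) hA2pos.le
    have h4 : 0 ≤ Bp * Mm w := mul_nonneg hBppos.le (gauge_nonneg hMm w)
    have h5 : 0 ≤ A2 * (Bp * Mm w) := mul_nonneg hA2pos.le h4
    linarith only [h1, h2, h3, h4, h5]
  obtain ⟨c, hc0, hcore⟩ := core Mp Mm hMp hMm A hA hcomp β hβ Cp hCp hucp
  have h2β : (0:ℝ) < (2:ℝ) ^ β := Real.rpow_pos_of_pos (by norm_num) β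
  set η := 1 / (8 * (Bp * (1 + A2)) * 2 ^ β) with hηdef
  have hηpos : 0 < η := by positivity
  have h78β : (0:ℝ) < (7/8:ℝ) ^ β := Real.rpow_pos_of_pos (by norm_num) β
  refine ⟨min η (c/2 * (7/8) ^ β), lt_min hηpos (by positivity), ?_⟩
  intro ε hε x y hx hy hxy
  obtain ⟨hε0, hε2⟩ := hε
  have hεβ0 : 0 ≤ ε ^ β := Real.rpow_nonneg hε0 β
  have hmidp : Mp ((2:ℝ)⁻¹ • (x + y)) ≤ (Mp x + Mp y)/2 := by
    rw [hMp.1 (2:ℝ)⁻¹ (by norm_num) (x + y)]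
    linarith only [hMp.2.1 x y]
  have hmidm : Mm ((2:ℝ)⁻¹ • (x + y)) ≤ (Mm x + Mm y)/2 := by
    rw [hMm.1 (2:ℝ)⁻¹ (by norm_num) (x + y)]
    linarith only [hMm.2.1 x y]
  set r := (Mp x + Mm x) / 2 with hrdef
  set s := (Mp y + Mm y) / 2 with hsdef
  have hsumx : Mp x + Mm x = 2 * r := by rw [hrdef]; ring
  have hsumy : Mp y + Mm y = 2 * s := by rw [hsdef]; ring
  by_cases hS : η * ε ^ β ≤ 1 - (r + s)/2
  · have hmul : min η (c/2 * (7/8) ^ β) * ε ^ β ≤ η * ε ^ β :=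
      mul_le_mul_of_nonneg_right (min_le_left _ _) hεβ0
    linarith only [hmul, hS, hmidp, hmidm, hsumx, hsumy]
  · push_neg at hS
    have hεpos : 0 < ε := by
      rcases lt_or_eq_of_le hε0 with h | h
      · exact h
      · exfalso
        rw [← h, Real.zero_rpow hβpos.ne', mul_zero] at hS
        linarith only [hS, hx, hy]
    -- key smallness estimate
    have hkey : 16 * (Bp * (1 + A2)) * (η * ε ^ β) ≤ ε := by
      have hb : ε ^ (β - 1) ≤ 2 ^ (β - 1) := Real.rpow_le_rpow hε0 hε2 (by linarith)
      have he : ε ^ β = ε ^ (β - 1) * ε := by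
        rw [← Real.rpow_add_one hεpos.ne' (β - 1)]; norm_num
      have h2e : (2:ℝ) ^ (β - 1) = 2 ^ β / 2 := by
        rw [Real.rpow_sub (by norm_num : (0:ℝ) < 2), Real.rpow_one]
      have hεβle : ε ^ β ≤ 2 ^ β / 2 * ε := by
        rw [he, ← h2e]
        exact mul_le_mul_of_nonneg_right hb hεpos.le
      have heq : 16 * (Bp * (1 + A2)) * (η * (2 ^ β / 2 * ε)) = ε := by
        rw [hηdef]
        field_simp
        ring
      calc 16 * (Bp * (1 + A2)) * (η * ε ^ β)
          ≤ 16 * (Bp * (1 + A2)) * (η * (2 ^ β / 2 * ε)) := by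
            apply mul_le_mul_of_nonneg_left (mul_le_mul_of_nonneg_left hεβle hηpos.le)
            positivity
        _ = ε := heq
    have hη18 : η * ε ^ β ≤ 1/8 := by
      have h1 : 0 ≤ η * ε ^ β := by positivity
      nlinarith only [hkey, hε2, hBF1, h1]
    have hrlb : 3/4 ≤ r := by linarith only [hS, hη18, hy]
    have hslb : 3/4 ≤ s := by linarith only [hS, hη18, hx]
    have hr0 : 0 < r := by linarith
    have hs0 : 0 < s := by linarith
    have hd1 : r - s ≤ 2 * (η * ε ^ β) := by linarith only [hS, hx]
    have hd2 : s - r ≤ 2 * (η * ε ^ β) := by linarith only [hS, hy]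
    have hC2 : min η (c/2 * (7/8) ^ β) ≤ c/2 * (7/8) ^ β := min_le_right _ _
    have hmul2 : min η (c/2 * (7/8) ^ β) * ε ^ β ≤ (c/2 * (7/8) ^ β) * ε ^ β :=
      mul_le_mul_of_nonneg_right hC2 hεβ0
    have hpow78 : ((7:ℝ)/8 * ε) ^ β = (7/8) ^ β * ε ^ β :=
      Real.mul_rpow (by norm_num) hε0
    have hδ78a : 0 ≤ 7/8 * ε := by linarith
    have hδ78b : 7/8 * ε ≤ 2 := by linarith
    rcases le_total s r with hsr | hsr
    · -- scale x down to u with value s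
      have hBFd : 8 * (Bp * (1 + A2)) * (r - s) ≤ ε := by
        have h1 := mul_le_mul_of_nonneg_left hd1 (by positivity : (0:ℝ) ≤ 8 * (Bp * (1 + A2)))
        linarith only [h1, hkey]
      have hrs8 : 8 * (r - s) ≤ ε := by
        have h2 : 0 ≤ (Bp * (1 + A2) - 1) * (r - s) :=
          mul_nonneg (by linarith only [hBF1]) (by linarith only [hsr])
        linarith only [hBFd, h2]
      set u := (s/r) • x with hudef
      have hMpu : Mp u = s/r * Mp x := hMp.1 _ (div_nonneg hs0.le hr0.le) x
      have hMmu : Mm u = s/r * Mm x := hMm.1 _ (div_nonneg hs0.le hr0.le) x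
      have hFu : Mp u + Mm u = 2 * s := by
        rw [hMpu, hMmu, ← mul_add, hsumx]
        field_simp
      have hxueq : x - u = ((r - s)/r) • x := by
        rw [hudef]; match_scalars; field_simp
      have hxusum : Mp (x - u) + Mm (x - u) = 2 * (r - s) := by
        rw [hxueq, hMp.1 _ (div_nonneg (by linarith) hr0.le) x,
          hMm.1 _ (div_nonneg (by linarith) hr0.le) x, ← mul_add, hsumx]
        field_simp
      have htrip : Mp (x - y) ≤ Mp (x - u) + Mp (u - y) := by
        have h := hMp.2.1 (x - u) (u - y)
        have e : (x - u) + (u - y) = x - y := by abel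
        rwa [e] at h
      have htrim : Mm (x - y) ≤ Mm (x - u) + Mm (u - y) := by
        have h := hMm.2.1 (x - u) (u - y)
        have e : (x - u) + (u - y) = x - y := by abel
        rwa [e] at h
      have hsep : 2 * (7/8 * ε) ≤ Mp (u - y) + Mm (u - y) := by
        linarith only [htrip, htrim, hxy, hxusum, hrs8]
      have hcb := hcore s (7/8 * ε) u y hslb hy hδ78a hδ78b hFu hsumy hsep
      rw [hpow78] at hcb
      have hmid_id : (2:ℝ)⁻¹ • (x + y) = (2:ℝ)⁻¹ • (u + y) + ((r - s)/(2*r)) • x := by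
        rw [hudef]; match_scalars <;> field_simp <;> ring
      have h1p : Mp ((2:ℝ)⁻¹ • (x + y)) ≤ Mp ((2:ℝ)⁻¹ • (u + y)) + ((r - s)/(2*r)) * Mp x := by
        calc Mp ((2:ℝ)⁻¹ • (x + y))
            = Mp ((2:ℝ)⁻¹ • (u + y) + ((r - s)/(2*r)) • x) := by rw [← hmid_id]
          _ ≤ Mp ((2:ℝ)⁻¹ • (u + y)) + Mp (((r - s)/(2*r)) • x) := hMp.2.1 _ _
          _ = Mp ((2:ℝ)⁻¹ • (u + y)) + ((r - s)/(2*r)) * Mp x := by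
              rw [hMp.1 ((r - s)/(2*r)) (div_nonneg (by linarith) (by linarith)) x]
      have h1m : Mm ((2:ℝ)⁻¹ • (x + y)) ≤ Mm ((2:ℝ)⁻¹ • (u + y)) + ((r - s)/(2*r)) * Mm x := by
        calc Mm ((2:ℝ)⁻¹ • (x + y))
            = Mm ((2:ℝ)⁻¹ • (u + y) + ((r - s)/(2*r)) • x) := by rw [← hmid_id]
          _ ≤ Mm ((2:ℝ)⁻¹ • (u + y)) + Mm (((r - s)/(2*r)) • x) := hMm.2.1 _ _
          _ = Mm ((2:ℝ)⁻¹ • (u + y)) + ((r - s)/(2*r)) * Mm x := by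
              rw [hMm.1 ((r - s)/(2*r)) (div_nonneg (by linarith) (by linarith)) x]
      have hcoef : ((r - s)/(2*r)) * Mp x + ((r - s)/(2*r)) * Mm x = r - s := by
        rw [← mul_add, hsumx]
        field_simp
      linarith only [hcb, h1p, h1m, hcoef, hx, hy, hmul2]
    · -- scale y down to v with value r
      have hBFd : 8 * (Bp * (1 + A2)) * (s - r) ≤ ε := by
        have h1 := mul_le_mul_of_nonneg_left hd2 (by positivity : (0:ℝ) ≤ 8 * (Bp * (1 + A2)))
        linarith only [h1, hkey]
      set v := (r/s) • y with hvdef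
      have hMpv : Mp v = r/s * Mp y := hMp.1 _ (div_nonneg hr0.le hs0.le) y
      have hMmv : Mm v = r/s * Mm y := hMm.1 _ (div_nonneg hr0.le hs0.le) y
      have hFv : Mp v + Mm v = 2 * r := by
        rw [hMpv, hMmv, ← mul_add, hsumy]
        field_simp
      have hyveq : y - v = ((s - r)/s) • y := by
        rw [hvdef]; match_scalars; field_simp
      have hyvsum : Mp (y - v) + Mm (y - v) = 2 * (s - r) := by
        rw [hyveq, hMp.1 _ (div_nonneg (by linarith) hs0.le) y,
          hMm.1 _ (div_nonneg (by linarith) hs0.le) y, ← mul_add, hsumy]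
        field_simp
      have hvysum : Mp (v - y) + Mm (v - y) ≤ (Bp * (1 + A2)) * (2 * (s - r)) := by
        have h := hFneg (y - v)
        rw [hyvsum] at h
        have e : -(y - v) = v - y := by abel
        rwa [e] at h
      have htrip : Mp (x - y) ≤ Mp (x - v) + Mp (v - y) := by
        have h := hMp.2.1 (x - v) (v - y)
        have e : (x - v) + (v - y) = x - y := by abel
        rwa [e] at h
      have htrim : Mm (x - y) ≤ Mm (x - v) + Mm (v - y) := by
        have h := hMm.2.1 (x - v) (v - y)
        have e : (x - v) + (v - y) = x - y := by abel
        rwa [e] at h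
      have hsep : 2 * (7/8 * ε) ≤ Mp (x - v) + Mm (x - v) := by
        linarith only [htrip, htrim, hxy, hvysum, hBFd]
      have hcb := hcore r (7/8 * ε) x v hrlb hx hδ78a hδ78b hsumx hFv hsep
      rw [hpow78] at hcb
      have hmid_id : (2:ℝ)⁻¹ • (x + y) = (2:ℝ)⁻¹ • (x + v) + ((s - r)/(2*s)) • y := by
        rw [hvdef]; match_scalars <;> field_simp <;> ring
      have h1p : Mp ((2:ℝ)⁻¹ • (x + y)) ≤ Mp ((2:ℝ)⁻¹ • (x + v)) + ((s - r)/(2*s)) * Mp y := by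
        calc Mp ((2:ℝ)⁻¹ • (x + y))
            = Mp ((2:ℝ)⁻¹ • (x + v) + ((s - r)/(2*s)) • y) := by rw [← hmid_id]
          _ ≤ Mp ((2:ℝ)⁻¹ • (x + v)) + Mp (((s - r)/(2*s)) • y) := hMp.2.1 _ _
          _ = Mp ((2:ℝ)⁻¹ • (x + v)) + ((s - r)/(2*s)) * Mp y := by
              rw [hMp.1 ((s - r)/(2*s)) (div_nonneg (by linarith) (by linarith)) y]
      have h1m : Mm ((2:ℝ)⁻¹ • (x + y)) ≤ Mm ((2:ℝ)⁻¹ • (x + v)) + ((s - r)/(2*s)) * Mm y := by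
        calc Mm ((2:ℝ)⁻¹ • (x + y))
            = Mm ((2:ℝ)⁻¹ • (x + v) + ((s - r)/(2*s)) • y) := by rw [← hmid_id]
          _ ≤ Mm ((2:ℝ)⁻¹ • (x + v)) + Mm (((s - r)/(2*s)) • y) := hMm.2.1 _ _
          _ = Mm ((2:ℝ)⁻¹ • (x + v)) + ((s - r)/(2*s)) * Mm y := by
              rw [hMm.1 ((s - r)/(2*s)) (div_nonneg (by linarith) (by linarith)) y]
      have hcoef : ((s - r)/(2*s)) * Mp y + ((s - r)/(2*s)) * Mm y = s - r := by
        rw [← mul_add, hsumy]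
        field_simp
      linarith only [hcb, h1p, h1m, hcoef, hx, hy, hmul2]
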